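/- arXiv:2107.09024 — 2 statements merged into one kernel-verified Lean document; each statement's English description precedes it below -/
import Mathlib

section
/- Let r ≥ 0 and s ≥ 1. Let A₁, A₂, A₃ be real polynomials in three variables x₁, x₂, x₃ such that for each k, deg_{x_k} A_k ≤ r + 1 and deg_{x_j} A_k ≤ r for j ≠ k. Let S₁, S₂, S₃ be real polynomials in two variables u, v with deg_u S_k ≤ s and deg_v S_k ≤ s, and let N₁, N₂, N₃ be the components of the cross product ∂_u S × ∂_v S of the formal partial derivatives. Then the bivariate polynomial r̂ = Σ_{k=1}^{3} A_k(S₁,S₂,S₃) · N_k satisfies deg_u r̂ ≤ 3s(r+1) − 1 and deg_v r̂ ≤ 3s(r+1) − 1. -/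
open MvPolynomial

section aux

variable {σ : Type*} {R : Type*} [CommSemiring R]

lemma degreeOf_monomial_le (i : σ) (m : σ →₀ ℕ) (a : R) :
    degreeOf i (monomial m a) ≤ m i := by
  rw [degreeOf_le_iff]
  intro n hn
  have := support_monomial_subset hn
  simp only [Finset.mem_singleton] at this
  subst this; exact le_rfl

lemma degreeOf_pderiv_le (i j : σ) (p : MvPolynomial σ R) :
    degreeOf i (pderiv j p) ≤ degreeOf i p := by
  classical
  conv_lhs => rw [as_sum p, map_sum]
  refine (degreeOf_sum_le i _ _).trans (Finset.sup_le fun m hm => ?_)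
  rw [pderiv_monomial]
  refine (degreeOf_monomial_le i _ _).trans
    (le_trans ?_ (monomial_le_degreeOf i hm))
  rw [Finsupp.tsub_apply]
  exact Nat.sub_le _ _

lemma degreeOf_pderiv_self_le (i : σ) (p : MvPolynomial σ R) :
    degreeOf i (pderiv i p) ≤ degreeOf i p - 1 := by
  classical
  conv_lhs => rw [as_sum p, map_sum]
  refine (degreeOf_sum_le i _ _).trans (Finset.sup_le fun m hm => ?_)
  rw [pderiv_monomial]
  by_cases h : m i = 0
  · rw [show coeff m p * m i = 0 by simp [h], map_zero, degreeOf_zero]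
    exact Nat.zero_le _
  · refine (degreeOf_monomial_le i _ _).trans ?_
    rw [Finsupp.tsub_apply, Finsupp.single_eq_same]
    exact Nat.sub_le_sub_right (monomial_le_degreeOf i hm) 1

lemma degreeOf_aeval_le {n : ℕ} (i : σ) (P : MvPolynomial (Fin n) R)
    (S : Fin n → MvPolynomial σ R) :
    degreeOf i (aeval S P) ≤ ∑ j : Fin n, degreeOf j P * degreeOf i (S j) := by
  classical
  conv_lhs => rw [as_sum P, map_sum]
  refine (degreeOf_sum_le i _ _).trans (Finset.sup_le fun m hm => ?_)
  rw [aeval_monomial]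
  refine (degreeOf_mul_le i _ _).trans ?_
  have h1 : degreeOf i (algebraMap R (MvPolynomial σ R) (coeff m P)) = 0 := degreeOf_C _ _
  rw [h1, zero_add]
  have h2 : m.prod (fun j e => S j ^ e) = ∏ j : Fin n, S j ^ m j := by
    rw [Finsupp.prod]
    refine Finset.prod_subset (Finset.subset_univ _) fun j _ hj => ?_
    simp [Finsupp.notMem_support_iff.mp hj]
  rw [h2]
  refine (degreeOf_prod_le i _ _).trans (Finset.sum_le_sum fun j _ => ?_)
  refine (degreeOf_pow_le i _ _).trans ?_
  exact Nat.mul_le_mul (monomial_le_degreeOf j hm) le_rfl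

end aux

/-- Let `r ≥ 0`, `s ≥ 1`. If `A₁, A₂, A₃` are trivariate real polynomials with
`deg_{x_k} A_k ≤ r + 1` and `deg_{x_j} A_k ≤ r` for `j ≠ k`, and `S₁, S₂, S₃` are bivariate
real polynomials (variables `u = 0`, `v = 1`) of degree at most `s` in each variable, with
`N₁, N₂, N₃` the components of the cross product `∂_u S × ∂_v S`, then the bivariate
polynomial `r̂ = Σₖ Aₖ(S₁,S₂,S₃) · Nₖ` has degree at most `3s(r+1) − 1` in each variable. -/
theorem stmt_5 (r s : ℕ) (hs : 1 ≤ s)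
    (A : Fin 3 → MvPolynomial (Fin 3) ℝ)
    (hAdiag : ∀ k, degreeOf k (A k) ≤ r + 1)
    (hAoff : ∀ k j, j ≠ k → degreeOf j (A k) ≤ r)
    (S : Fin 3 → MvPolynomial (Fin 2) ℝ)
    (hSu : ∀ k, degreeOf 0 (S k) ≤ s) (hSv : ∀ k, degreeOf 1 (S k) ≤ s)
    (N : Fin 3 → MvPolynomial (Fin 2) ℝ)
    (hN₁ : N 0 = pderiv 0 (S 1) * pderiv 1 (S 2) - pderiv 0 (S 2) * pderiv 1 (S 1))
    (hN₂ : N 1 = pderiv 0 (S 2) * pderiv 1 (S 0) - pderiv 0 (S 0) * pderiv 1 (S 2))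
    (hN₃ : N 2 = pderiv 0 (S 0) * pderiv 1 (S 1) - pderiv 0 (S 1) * pderiv 1 (S 0))
    (rhat : MvPolynomial (Fin 2) ℝ)
    (hrhat : rhat = ∑ k : Fin 3, aeval S (A k) * N k) :
    degreeOf 0 rhat ≤ 3 * s * (r + 1) - 1 ∧ degreeOf 1 rhat ≤ 3 * s * (r + 1) - 1 := by
  have hA : ∀ (i : Fin 2), (∀ k, degreeOf i (S k) ≤ s) → ∀ k,
      degreeOf i (aeval S (A k)) ≤ s * (3 * r + 1) := by
    intro i hSi k
    refine (degreeOf_aeval_le i (A k) S).trans ?_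
    rw [Fin.sum_univ_three]
    have e0 := hSi 0; have e1 := hSi 1; have e2 := hSi 2
    fin_cases k
    · have h0 := hAdiag 0
      have h1 := hAoff 0 1 (by decide); have h2 := hAoff 0 2 (by decide)
      calc degreeOf 0 (A 0) * degreeOf i (S 0) + degreeOf 1 (A 0) * degreeOf i (S 1)
            + degreeOf 2 (A 0) * degreeOf i (S 2) ≤ (r+1)*s + r*s + r*s :=
            add_le_add (add_le_add (Nat.mul_le_mul h0 e0)
              (Nat.mul_le_mul h1 e1)) (Nat.mul_le_mul h2 e2)
        _ = s * (3*r+1) := by ring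
    · have h1 := hAdiag 1
      have h0 := hAoff 1 0 (by decide); have h2 := hAoff 1 2 (by decide)
      calc degreeOf 0 (A 1) * degreeOf i (S 0) + degreeOf 1 (A 1) * degreeOf i (S 1)
            + degreeOf 2 (A 1) * degreeOf i (S 2) ≤ r*s + (r+1)*s + r*s :=
            add_le_add (add_le_add (Nat.mul_le_mul h0 e0)
              (Nat.mul_le_mul h1 e1)) (Nat.mul_le_mul h2 e2)
        _ = s * (3*r+1) := by ring
    · have h2 := hAdiag 2
      have h0 := hAoff 2 0 (by decide); have h1 := hAoff 2 1 (by decide)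
      calc degreeOf 0 (A 2) * degreeOf i (S 0) + degreeOf 1 (A 2) * degreeOf i (S 1)
            + degreeOf 2 (A 2) * degreeOf i (S 2) ≤ r*s + r*s + (r+1)*s :=
            add_le_add (add_le_add (Nat.mul_le_mul h0 e0)
              (Nat.mul_le_mul h1 e1)) (Nat.mul_le_mul h2 e2)
        _ = s * (3*r+1) := by ring
  have hN : ∀ (i : Fin 2) (d0 d1 : ℕ),
      (∀ m, degreeOf i (pderiv 0 (S m)) ≤ d0) →
      (∀ m, degreeOf i (pderiv 1 (S m)) ≤ d1) →
      ∀ k, degreeOf i (N k) ≤ d0 + d1 := by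
    intro i d0 d1 hp0 hp1 k
    have hprod : ∀ m m' : Fin 3,
        degreeOf i (pderiv 0 (S m) * pderiv 1 (S m')) ≤ d0 + d1 := fun m m' =>
      (degreeOf_mul_le i _ _).trans (add_le_add (hp0 m) (hp1 m'))
    fin_cases k
    · show degreeOf i (N 0) ≤ d0 + d1
      rw [hN₁]; exact (degreeOf_sub_le i _ _).trans (max_le (hprod _ _) (hprod _ _))
    · show degreeOf i (N 1) ≤ d0 + d1
      rw [hN₂]; exact (degreeOf_sub_le i _ _).trans (max_le (hprod _ _) (hprod _ _))
    · show degreeOf i (N 2) ≤ d0 + d1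
      rw [hN₃]; exact (degreeOf_sub_le i _ _).trans (max_le (hprod _ _) (hprod _ _))
  have key : ∀ (i : Fin 2), (∀ k, degreeOf i (S k) ≤ s) →
      (∀ k, degreeOf i (N k) ≤ 2*s - 1) →
      degreeOf i rhat ≤ 3 * s * (r + 1) - 1 := by
    intro i hSi hNi
    rw [hrhat]
    refine (degreeOf_sum_le i _ _).trans (Finset.sup_le fun k _ => ?_)
    refine (degreeOf_mul_le i _ _).trans
      ((add_le_add (hA i hSi k) (hNi k)).trans ?_)
    obtain ⟨t, rfl⟩ := Nat.exists_eq_add_of_le hs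
    have h1 : 3*(1+t)*(r+1) = (1+t)*(3*r+1) + (2*(1+t)-1) + 1 := by
      have h2 : 2*(1+t)-1 = 2*t+1 := by omega
      rw [h2]; ring
    omega
  constructor
  · refine key 0 hSu fun k => (hN 0 (s-1) s (fun m => ?_) (fun m => ?_) k).trans (by omega)
    · exact (degreeOf_pderiv_self_le 0 (S m)).trans (Nat.sub_le_sub_right (hSu m) 1)
    · exact (degreeOf_pderiv_le 0 1 (S m)).trans (hSu m)
  · refine key 1 hSv fun k => (hN 1 s (s-1) (fun m => ?_) (fun m => ?_) k).trans (by omega)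
    · exact (degreeOf_pderiv_le 1 0 (S m)).trans (hSv m)
    · exact (degreeOf_pderiv_self_le 1 (S m)).trans (Nat.sub_le_sub_right (hSv m) 1)
end

section
/- For natural numbers p and i with i ≤ p, the formal derivative of the polynomial Σ_{j=i+1}^{p+1} B_j^{p+1} equals (p+1)·B_i^p; equivalently, (1/(p+1)) Σ_{j=i+1}^{p+1} B_j^{p+1} is an antiderivative of the Bernstein polynomial B_i^p. -/
/-- For `i ≤ p`, the formal derivative of `Σ_{j=i+1}^{p+1} B_j^{p+1}` equals
`(p+1) · B_i^p`; i.e. `(1/(p+1)) Σ_{j=i+1}^{p+1} B_j^{p+1}` is an antiderivative of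
the Bernstein polynomial `B_i^p`. -/
theorem stmt_8 (p i : ℕ) (h : i ≤ p) :
    Polynomial.derivative (∑ j ∈ Finset.Icc (i + 1) (p + 1), bernsteinPolynomial ℝ (p + 1) j)
      = ((p : ℝ) + 1) • bernsteinPolynomial ℝ p i := by
  rw [map_sum, ← Finset.Ico_add_one_right_eq_Icc, Finset.sum_Ico_eq_sum_range]
  have hcard : p + 1 + 1 - (i + 1) = p + 1 - i := by omega
  rw [hcard]
  have key : ∀ k, Polynomial.derivative (bernsteinPolynomial ℝ (p + 1) (i + 1 + k)) =
      (((p : ℕ) : Polynomial ℝ) + 1) * (bernsteinPolynomial ℝ p (i + k) - bernsteinPolynomial ℝ p (i + k + 1)) := by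
    intro k
    have := bernsteinPolynomial.derivative_succ_aux ℝ p (i + k)
    rw [show i + 1 + k = i + k + 1 by omega]
    rw [this]
  simp only [key, ← Finset.mul_sum]
  have tel : (∑ k ∈ Finset.range (p + 1 - i),
      (bernsteinPolynomial ℝ p (i + k) - bernsteinPolynomial ℝ p (i + k + 1)))
      = bernsteinPolynomial ℝ p (i + 0) - bernsteinPolynomial ℝ p (i + (p + 1 - i)) :=
    Finset.sum_range_sub' (fun k => bernsteinPolynomial ℝ p (i + k)) _
  rw [tel, add_zero]
  rw [show i + (p + 1 - i) = p + 1 from by omega]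
  rw [bernsteinPolynomial.eq_zero_of_lt ℝ (Nat.lt_succ_self p), sub_zero,
    Polynomial.smul_eq_C_mul]
  simp only [map_add, map_one, Polynomial.C_eq_natCast]
end
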